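/- Let G be a finite simple graph on vertex set {1,…,n} (no self-loops) in which every vertex has at least one neighbor, with graph Laplacian L. If a matrix P ∈ ℝ^{n×d} admits matrices W^Q, W^K ∈ ℝ^{d×d} with (1/√d_k)·(P W^Q)(P W^K)ᵀ = L, then P is both node-identifying and adjacency-identifying. -/

import Mathlib

open Matrix

/-- The unnormalized attention matrix `(1/√d_k)·(P W^Q)(P W^K)ᵀ`. -/
noncomputable def attn {n : ℕ} {m : Type*} [Fintype m] (dk : ℝ)
    (P : Matrix (Fin n) m ℝ) (WQ WK : Matrix m m ℝ) : Matrix (Fin n) (Fin n) ℝ :=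
  (1 / Real.sqrt dk) • ((P * WQ) * (P * WK)ᵀ)

/-- `P` is node-identifying: for some `W^Q, W^K`, the `(i,j)` entry of
`(1/√d_k)·(P W^Q)(P W^K)ᵀ` is a maximum of its row exactly when `i = j`. -/
def IsNodeIdentifying {n : ℕ} {m : Type*} [Fintype m] (dk : ℝ)
    (P : Matrix (Fin n) m ℝ) : Prop :=
  ∃ WQ WK : Matrix m m ℝ, ∀ i j,
    (∀ l, attn dk P WQ WK i l ≤ attn dk P WQ WK i j) ↔ i = j

/-- `P` is adjacency-identifying: for some `W^Q, W^K`, the `(i,j)` entry of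
`(1/√d_k)·(P W^Q)(P W^K)ᵀ` is a maximum of its row exactly when `i` and `j` are adjacent. -/
def IsAdjIdentifying {n : ℕ} {m : Type*} [Fintype m] (dk : ℝ) (G : SimpleGraph (Fin n))
    (P : Matrix (Fin n) m ℝ) : Prop :=
  ∃ WQ WK : Matrix m m ℝ, ∀ i j,
    (∀ l, attn dk P WQ WK i l ≤ attn dk P WQ WK i j) ↔ G.Adj i j

lemma lap_entry {n : ℕ} (G : SimpleGraph (Fin n)) [DecidableRel G.Adj] (i j : Fin n) :
    G.lapMatrix ℝ i j =
      (if i = j then (G.degree i : ℝ) else 0) - (if G.Adj i j then 1 else 0) := by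
  simp [SimpleGraph.lapMatrix, SimpleGraph.degMatrix, SimpleGraph.adjMatrix, Matrix.diagonal_apply]

/-- if `(1/√d_k)·(P W^Q)(P W^K)ᵀ` equals the graph Laplacian for some
`W^Q, W^K`, then `P` is both node-identifying and adjacency-identifying. -/
theorem stmt5 {n d : ℕ} (G : SimpleGraph (Fin n)) [DecidableRel G.Adj]
    (hdeg : ∀ v, 0 < G.degree v) (dk : ℝ) (hdk : 0 < dk)
    (P : Matrix (Fin n) (Fin d) ℝ) (WQ WK : Matrix (Fin d) (Fin d) ℝ)
    (hfac : (1 / Real.sqrt dk) • ((P * WQ) * (P * WK)ᵀ) = G.lapMatrix ℝ) :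
    IsNodeIdentifying dk P ∧ IsAdjIdentifying dk G P := by
  have hL : attn dk P WQ WK = G.lapMatrix ℝ := hfac
  have hLneg : attn dk P (-WQ) WK = -(G.lapMatrix ℝ) := by
    rw [← hL]
    simp [attn, Matrix.mul_neg, Matrix.neg_mul]
  constructor
  · refine ⟨WQ, WK, fun i j => ?_⟩
    simp only [hL]
    constructor
    · intro h
      by_contra hne
      have h1 := h i
      rw [lap_entry, lap_entry, if_pos rfl, if_neg hne, if_neg (fun h => G.irrefl h : ¬ G.Adj i i)] at h1
      have hd' : (0:ℝ) < (G.degree i : ℝ) := by exact_mod_cast hdeg i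
      split_ifs at h1 <;> linarith
    · rintro rfl
      intro l
      rw [lap_entry, lap_entry]
      rw [if_pos rfl, if_neg (fun h => G.irrefl h : ¬ G.Adj i i)]
      have hd := hdeg i
      by_cases hl : i = l
      · subst hl; simp
      · simp only [if_neg hl]
        have : (0:ℝ) ≤ (G.degree i : ℝ) := by positivity
        split_ifs <;> simp <;> linarith
  · refine ⟨-WQ, WK, fun i j => ?_⟩
    simp only [hLneg, Matrix.neg_apply]
    have val : ∀ l, -(G.lapMatrix ℝ i l) =
        (if G.Adj i l then 1 else 0) - (if i = l then (G.degree i : ℝ) else 0) := by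
      intro l; rw [lap_entry]; ring
    have hub : ∀ l, -(G.lapMatrix ℝ i l) ≤ 1 := by
      intro l
      rw [val]
      have : (0:ℝ) ≤ (if i = l then (G.degree i : ℝ) else 0) := by positivity
      split_ifs with h1 <;> linarith
    obtain ⟨w, hw⟩ := (G.degree_pos_iff_exists_adj i).mp (hdeg i)
    constructor
    · intro h
      by_contra hadj
      have h1 := h w
      rw [val, val] at h1
      have hiw : ¬ i = w := fun e => G.irrefl (e ▸ hw)
      rw [if_pos hw, if_neg hiw, if_neg hadj] at h1
      have : (0:ℝ) ≤ (if i = j then (G.degree i : ℝ) else 0) := by positivity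
      linarith
    · intro hadj l
      have hij : ¬ i = j := fun e => G.irrefl (e ▸ hadj)
      have : -(G.lapMatrix ℝ i j) = 1 := by
        rw [val, if_pos hadj, if_neg hij]; ring
      rw [this]
      exact hub l
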